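/- In the graph G' of the Min-Weight Triangle reduction, any finite-cost Viterbi path must have the following structure: it stays at node 1 for some prefix (using the self-loop), then during the three consecutive observations (u, u, ⊥) for a single u ∈ U moves 1 → v_1 → v_2 → 2 with v_1 ∈ V_1 and v_2 ∈ V_2, and then stays at node 2 until the end; moreover its total cost is w(v_1,u) + w(v_1,v_2) + w(v_2,u). -/

import Mathlib

open scoped ENNReal NNReal

/-- States of the HMM in the Min-Weight Triangle reduction:
`Sum.inl false` is node 1 (start), `Sum.inl true` is node 2 (end). -/
abbrev TriState (n n' : ℕ) := Bool ⊕ (Fin n ⊕ Fin n')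

/-- Symbols: `Sum.inl u` for `u ∈ U`, `Sum.inr false` is `⊥`, `Sum.inr true` is `⊥_F`. -/
abbrev TriSym (m : ℕ) := Fin m ⊕ Bool

/-- Transition cost matrix of the graph `G'` of the reduction. -/
noncomputable def triA {n n' : ℕ} (w : Fin n → Fin n' → ℝ≥0) :
    TriState n n' → TriState n n' → ℝ≥0∞
  | Sum.inl false, Sum.inl false => 0
  | Sum.inl false, Sum.inr (Sum.inl _) => 0
  | Sum.inr (Sum.inl v1), Sum.inr (Sum.inr v2) => (w v1 v2 : ℝ≥0∞)
  | Sum.inr (Sum.inr _), Sum.inl true => 0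
  | Sum.inl true, Sum.inl true => 0
  | _, _ => ⊤

/-- Observation cost matrix of the reduction. -/
noncomputable def triB {n n' m : ℕ}
    (w1 : Fin n → Fin m → ℝ≥0) (w2 : Fin n' → Fin m → ℝ≥0) :
    TriState n n' → TriSym m → ℝ≥0∞
  | Sum.inr (Sum.inl v1), Sum.inl u => (w1 v1 u : ℝ≥0∞)
  | Sum.inr (Sum.inr v2), Sum.inl u => (w2 v2 u : ℝ≥0∞)
  | Sum.inr _, Sum.inr _ => ⊤
  | Sum.inl false, Sum.inr true => ⊤
  | _, _ => 0

/-- The observation sequence: the blocks `(u, u, ⊥)` for each `u ∈ U`, then `⊥_F`. -/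
def triObs (m : ℕ) (t : ℕ) : TriSym m :=
  if h : t < 3 * m then
    (if t % 3 = 2 then Sum.inr false else Sum.inl ⟨t / 3, by omega⟩)
  else Sum.inr true

/-- Structure of finite-cost Viterbi paths in the Min-Weight Triangle reduction: any
finite-cost path stays at node 1, moves `1 → v₁ → v₂ → 2` during the block `(u, u, ⊥)`
of a single `u ∈ U`, stays at node 2 until the end, and its total cost is
`w(v₁,u) + w(v₁,v₂) + w(v₂,u)`. -/
theorem viterbi_reduction_path_structure
    (n n' m : ℕ)
    (w : Fin n → Fin n' → ℝ≥0)
    (w1 : Fin n → Fin m → ℝ≥0)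
    (w2 : Fin n' → Fin m → ℝ≥0)
    (u : ℕ → TriState n n')
    (hu0 : u 0 = Sum.inl false)
    (hfin : (∑ t ∈ Finset.range (3 * m + 1),
        (triA w (u t) (u (t + 1)) + triB w1 w2 (u (t + 1)) (triObs m t))) < ⊤) :
    ∃ (uu : Fin m) (v1 : Fin n) (v2 : Fin n'),
      (∀ t ≤ 3 * (uu : ℕ), u t = Sum.inl false) ∧
      u (3 * (uu : ℕ) + 1) = Sum.inr (Sum.inl v1) ∧
      u (3 * (uu : ℕ) + 2) = Sum.inr (Sum.inr v2) ∧
      (∀ t, 3 * (uu : ℕ) + 3 ≤ t → t ≤ 3 * m + 1 → u t = Sum.inl true) ∧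
      (∑ t ∈ Finset.range (3 * m + 1),
          (triA w (u t) (u (t + 1)) + triB w1 w2 (u (t + 1)) (triObs m t)))
        = ((w1 v1 uu + w v1 v2 + w2 v2 uu : ℝ≥0) : ℝ≥0∞) := by
  classical
  set f : ℕ → ℝ≥0∞ := fun t => triA w (u t) (u (t+1)) + triB w1 w2 (u (t+1)) (triObs m t)
    with hfdef
  have hterm : ∀ t ≤ 3*m, f t ≠ ⊤ := by
    intro t ht hcon
    have hle : f t ≤ ∑ t ∈ Finset.range (3*m+1), f t :=
      Finset.single_le_sum (fun i _ => zero_le) (Finset.mem_range.mpr (by omega))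
    rw [hcon] at hle
    exact absurd (lt_of_le_of_lt hle hfin) (lt_irrefl _)
  have hA : ∀ t ≤ 3*m, triA w (u t) (u (t+1)) ≠ ⊤ := by
    intro t ht h
    exact hterm t ht (by simp [hfdef, h])
  have hB : ∀ t ≤ 3*m, triB w1 w2 (u (t+1)) (triObs m t) ≠ ⊤ := by
    intro t ht h
    exact hterm t ht (by simp [hfdef, h])
  have hBtrue : ∀ s : TriSym m, triB w1 w2 (Sum.inl true) s = 0 := by
    rintro (a | (_|_)) <;> rfl
  -- the last state must be node 2
  have hlast : u (3*m+1) = Sum.inl true := by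
    have hb := hB (3*m) le_rfl
    have hobs : triObs m (3*m) = Sum.inr true := by simp [triObs]
    rw [hobs] at hb
    rcases h : u (3*m+1) with (_|_) | (v|v) <;> rw [h] at hb <;>
      first | rfl | exact absurd rfl hb
  have hex : ∃ t, u (t+1) ≠ Sum.inl false := ⟨3*m, by rw [hlast]; simp⟩
  set t0 := Nat.find hex with ht0def
  have ht0spec : u (t0+1) ≠ Sum.inl false := Nat.find_spec hex
  have ht0le : t0 ≤ 3*m := Nat.find_min' hex (by rw [hlast]; simp)
  have hpre : ∀ t ≤ t0, u t = Sum.inl false := by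
    intro t ht
    induction t with
    | zero => exact hu0
    | succ s ih =>
      have hs : s < t0 := by omega
      have := Nat.find_min hex hs
      simpa using this
  -- step 1 → v1
  have hAt0 := hA t0 ht0le
  rw [hpre t0 le_rfl] at hAt0
  obtain ⟨v1, h1⟩ : ∃ v1, u (t0+1) = Sum.inr (Sum.inl v1) := by
    rcases h : u (t0+1) with (_|_) | (v|v) <;> rw [h] at hAt0 <;>
      first | exact ⟨_, rfl⟩ | exact absurd rfl hAt0 | exact absurd h ht0spec
  -- timing of step 1 → v1
  have ht0time : t0 < 3*m ∧ t0 % 3 ≠ 2 := by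
    have hb := hB t0 ht0le
    rw [h1] at hb
    by_contra hcon
    push_neg at hcon
    unfold triObs at hb
    rcases Nat.lt_or_ge t0 (3*m) with hlt | hge
    · rw [dif_pos hlt, if_pos (hcon hlt)] at hb; exact hb rfl
    · rw [dif_neg (by omega)] at hb; exact hb rfl
  have ht1le : t0 + 1 ≤ 3*m := by omega
  -- step v1 → v2
  have hAt1 := hA (t0+1) ht1le
  rw [h1] at hAt1
  obtain ⟨v2, h2⟩ : ∃ v2, u (t0+2) = Sum.inr (Sum.inr v2) := by
    show ∃ v2, u (t0+1+1) = Sum.inr (Sum.inr v2)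
    rcases h : u (t0+1+1) with (_|_) | (v|v) <;> rw [h] at hAt1 <;>
      first | exact ⟨_, rfl⟩ | exact absurd rfl hAt1
  have ht1time : t0 + 1 < 3*m ∧ (t0+1) % 3 ≠ 2 := by
    have hb := hB (t0+1) ht1le
    rw [show t0+1+1 = t0+2 by rfl, h2] at hb
    by_contra hcon
    push_neg at hcon
    unfold triObs at hb
    rcases Nat.lt_or_ge (t0+1) (3*m) with hlt | hge
    · rw [dif_pos hlt, if_pos (hcon hlt)] at hb; exact hb rfl
    · rw [dif_neg (by omega)] at hb; exact hb rfl
  have hmod : t0 % 3 = 0 := by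
    have := ht0time.2
    have := ht1time.2
    omega
  have ht2le : t0 + 2 ≤ 3*m := by
    rcases ht1time with ⟨h, _⟩
    omega
  -- step v2 → 2
  have hAt2 := hA (t0+2) ht2le
  rw [show t0+2 = t0+1+1 from rfl, h2] at hAt2
  have h3 : u (t0+3) = Sum.inl true := by
    show u (t0+1+1+1) = Sum.inl true
    rcases h : u (t0+1+1+1) with (_|_) | (v|v) <;> rw [h] at hAt2 <;>
      first | rfl | exact absurd rfl hAt2
  -- tail stays at node 2
  have htail : ∀ t, t0 + 3 ≤ t → t ≤ 3*m+1 → u t = Sum.inl true := by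
    intro t hlo hhi
    induction t with
    | zero => omega
    | succ s ih =>
      rcases Nat.lt_or_ge (t0+3) (s+1) with hlt | hge
      · have hus : u s = Sum.inl true := ih (by omega) (by omega)
        have hAs := hA s (by omega)
        rw [hus] at hAs
        rcases h : u (s+1) with (_|_) | (v|v) <;> rw [h] at hAs <;>
          first | rfl | exact absurd rfl hAs
      · have : s + 1 = t0 + 3 := by omega
        rw [this]; exact h3
  -- the witness uu
  refine ⟨⟨t0/3, by omega⟩, v1, v2, ?_, ?_, ?_, ?_, ?_⟩
  · intro t ht
    exact hpre t (by simp only at ht; omega)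
  · have : 3 * (t0/3) = t0 := by omega
    simp only [this]; exact h1
  · have : 3 * (t0/3) = t0 := by omega
    simp only [this]; exact h2
  · intro t hlo hhi
    have : 3 * (t0/3) = t0 := by omega
    rw [this] at hlo
    exact htail t hlo hhi
  · -- cost computation
    have hobs0 : triObs m t0 = Sum.inl ⟨t0/3, by omega⟩ := by
      unfold triObs
      rw [dif_pos ht0time.1, if_neg ht0time.2]
    have hobs1 : triObs m (t0+1) = Sum.inl ⟨t0/3, by omega⟩ := by
      unfold triObs
      rw [dif_pos ht1time.1, if_neg ht1time.2]
      exact congrArg Sum.inl (Fin.ext (by simp; omega))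
    set uu : Fin m := ⟨t0/3, by omega⟩ with huu
    set c1 : ℝ≥0∞ := (w1 v1 uu : ℝ≥0∞) with hc1
    set c2 : ℝ≥0∞ := (w v1 v2 : ℝ≥0∞) + (w2 v2 uu : ℝ≥0∞) with hc2
    have hfval : ∀ t ∈ Finset.range (3*m+1),
        f t = (if t = t0 then c1 else 0) + (if t = t0+1 then c2 else 0) := by
      intro t ht
      rw [Finset.mem_range] at ht
      rcases eq_or_ne t t0 with rfl | hne0
      · rw [if_pos rfl, if_neg (by omega)]
        simp only [hfdef, hpre t0 le_rfl, h1, hobs0]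
        show triA w (Sum.inl false) (Sum.inr (Sum.inl v1)) + (w1 v1 uu : ℝ≥0∞) = c1 + 0
        rw [hc1]
        show 0 + (w1 v1 uu : ℝ≥0∞) = _ + 0
        rw [zero_add, add_zero]
      · rcases eq_or_ne t (t0+1) with rfl | hne1
        · rw [if_neg hne0, if_pos rfl]
          simp only [hfdef, h1, show t0+1+1 = t0+2 from rfl, h2, hobs1]
          show (w v1 v2 : ℝ≥0∞) + (w2 v2 uu : ℝ≥0∞) = 0 + c2
          rw [zero_add, hc2]
        · rw [if_neg hne0, if_neg hne1, add_zero]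
          rcases Nat.lt_or_ge t t0 with hlt | hge
          · -- before t0
            have hBfalse : triB w1 w2 (Sum.inl false) (triObs m t) = 0 := by
              unfold triObs
              rw [dif_pos (by omega)]
              split_ifs <;> rfl
            simp only [hfdef]
            rw [hpre t (le_of_lt hlt), hpre (t+1) (by omega), hBfalse]
            simp [triA]
          · -- t = t0 + 2 or later
            rcases eq_or_ne t (t0+2) with rfl | hne2
            · simp only [hfdef]
              rw [show t0+2 = t0+1+1 from rfl, h2, show t0+1+1+1 = t0+3 from rfl, h3,
                hBtrue]
              simp [triA]
            · have hge3 : t0 + 3 ≤ t := by omega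
              simp only [hfdef]
              rw [htail t hge3 (by omega), htail (t+1) (by omega) (by omega), hBtrue]
              simp [triA]
    rw [Finset.sum_congr rfl hfval, Finset.sum_add_distrib]
    rw [Finset.sum_ite_eq' (Finset.range (3*m+1)) t0 (fun _ => c1),
      Finset.sum_ite_eq' (Finset.range (3*m+1)) (t0+1) (fun _ => c2)]
    rw [if_pos (Finset.mem_range.mpr (by omega)), if_pos (Finset.mem_range.mpr (by omega))]
    rw [hc1, hc2]
    push_cast
    ring
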